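/- If g : Set X → ℝ is a non-increasing supermodular set function and f : ℝ → ℝ is convex and non-decreasing, then F(S) = f(g(∅)) − f(g(S)) is a non-decreasing submodular set function. -/

import Mathlib

/-- Key convexity fact: if `u ≤ x ≤ v` then `f x + f (u + v - x) ≤ f u + f v`. -/
lemma convex_pair_ineq (f : ℝ → ℝ) (hf : ConvexOn ℝ Set.univ f)
    {u v x : ℝ} (hux : u ≤ x) (hxv : x ≤ v) :
    f x + f (u + v - x) ≤ f u + f v := by
  rcases eq_or_lt_of_le (hux.trans hxv) with h | h
  · have hx : x = u := le_antisymm (h ▸ hxv) hux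
    subst hx
    simp [← h]
  · set t : ℝ := (v - x) / (v - u) with ht
    have hvu : (0:ℝ) < v - u := by linarith
    have ht0 : 0 ≤ t := div_nonneg (by linarith) hvu.le
    have ht1 : t ≤ 1 := by
      rw [div_le_one hvu]; linarith
    have hsum : t + (1 - t) = 1 := by ring
    have hx : x = t * u + (1 - t) * v := by
      have htm : t * (v - u) = v - x := div_mul_cancel₀ _ hvu.ne'
      linear_combination htm
    have hy : u + v - x = (1 - t) * u + t * v := by
      have htm : t * (v - u) = v - x := div_mul_cancel₀ _ hvu.ne'
      linear_combination (-1 : ℝ) * htm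
    have h1 := hf.2 (Set.mem_univ u) (Set.mem_univ v) ht0 (by linarith) hsum
    have h2 := hf.2 (Set.mem_univ u) (Set.mem_univ v) (by linarith : (0:ℝ) ≤ 1 - t) ht0
      (by ring)
    simp only [smul_eq_mul] at h1 h2
    rw [hy, hx]
    calc f (t * u + (1 - t) * v) + f ((1 - t) * u + t * v)
        ≤ (t * f u + (1 - t) * f v) + ((1 - t) * f u + t * f v) := add_le_add h1 h2
      _ = f u + f v := by ring

/-- If `g` is non-increasing supermodular and `f` is convex non-decreasing,
then `F S = f (g ∅) - f (g S)` is non-decreasing and submodular. -/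
theorem caching_gain_monotone_submodular
    {X : Type*} [Fintype X] (f : ℝ → ℝ) (g : Set X → ℝ)
    (hf_conv : ConvexOn ℝ Set.univ f) (hf_mono : Monotone f)
    (hg_antitone : ∀ A B : Set X, A ⊆ B → g B ≤ g A)
    (hg_supermod : ∀ A B : Set X, g A + g B ≤ g (A ∪ B) + g (A ∩ B)) :
    (∀ A B : Set X, A ⊆ B →
      f (g (∅ : Set X)) - f (g A) ≤ f (g (∅ : Set X)) - f (g B)) ∧
    (∀ A B : Set X,
      (f (g (∅ : Set X)) - f (g (A ∪ B))) + (f (g (∅ : Set X)) - f (g (A ∩ B))) ≤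
        (f (g (∅ : Set X)) - f (g A)) + (f (g (∅ : Set X)) - f (g B))) := by
  constructor
  · intro A B hAB
    have := hf_mono (hg_antitone A B hAB)
    linarith
  · intro A B
    -- suffices: f (g A) + f (g B) ≤ f (g (A ∪ B)) + f (g (A ∩ B))
    suffices h : f (g A) + f (g B) ≤ f (g (A ∪ B)) + f (g (A ∩ B)) by linarith
    set u := g (A ∪ B)
    set v := g (A ∩ B)
    have hu : u ≤ g A := hg_antitone A (A ∪ B) Set.subset_union_left
    have hbv : g B ≤ v := hg_antitone (A ∩ B) B Set.inter_subset_right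
    have hav : g A ≤ v := hg_antitone (A ∩ B) A Set.inter_subset_left
    have hsum : g A + g B ≤ u + v := hg_supermod A B
    have h1 : f (g B) ≤ f (u + v - g A) := hf_mono (by linarith)
    have h2 : f (g A) + f (u + v - g A) ≤ f u + f v :=
      convex_pair_ineq f hf_conv hu hav
    linarith
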